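/- For δ > 0, define μ_δ : ℂ → ℂ by μ_δ(z) = 1/3 if ⌊Re(z)/δ⌋ is odd and μ_δ(z) = −1/3 if ⌊Re(z)/δ⌋ is even. Then μ_δ converges weakly to 0 as δ → 0⁺: for every integrable function φ ∈ L¹(ℂ; ℂ), ∫_ℂ μ_δ(z)·φ(z) dA(z) → 0 as δ → 0⁺. -/

import Mathlib

open MeasureTheory

noncomputable section

/-- The Beltrami coefficient `μ_δ`: equal to `1/3` on the vertical strips where `⌊Re z / δ⌋` is
odd and to `−1/3` on those where it is even. -/
def muDelta (δ : ℝ) (z : ℂ) : ℂ :=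
  if Odd ⌊z.re / δ⌋ then (1/3 : ℂ) else (-(1/3) : ℂ)

lemma norm_muDelta (δ : ℝ) (z : ℂ) : ‖muDelta δ z‖ = 1/3 := by
  unfold muDelta
  split <;> simp

lemma measurable_muDelta (δ : ℝ) : Measurable (muDelta δ) := by
  have h1 : Measurable fun z : ℂ => ⌊z.re / δ⌋ :=
    (Complex.measurable_re.div_const δ).floor
  exact (measurable_from_top
    (f := fun n : ℤ => if Odd n then (1/3 : ℂ) else (-(1/3) : ℂ))).comp h1

lemma muDelta_add {δ : ℝ} (hδ : 0 < δ) (z : ℂ) :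
    muDelta δ (z + (δ : ℂ)) = - muDelta δ z := by
  unfold muDelta
  have h0 : (z + (δ : ℂ)).re = z.re + δ := by simp
  have h2 : (z.re + δ) / δ = z.re / δ + 1 := by field_simp
  rw [h0, h2, Int.floor_add_one]
  rcases Int.even_or_odd ⌊z.re / δ⌋ with h | h
  · rw [if_pos h.add_one, if_neg (Int.not_odd_iff_even.mpr h), neg_neg]
  · rw [if_neg (Int.not_odd_iff_even.mpr h.add_one), if_pos h]

/-- Continuity of translation in `L¹(ℂ)`. -/
lemma tendsto_translate_L1 (φ : ℂ → ℂ) (hφ : Integrable φ) :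
    Filter.Tendsto (fun δ : ℝ => ∫ z : ℂ, ‖φ (z + (δ : ℂ)) - φ z‖)
      (nhdsWithin 0 (Set.Ioi 0)) (nhds 0) := by
  rw [NormedAddCommGroup.tendsto_nhds_zero]
  intro ε hε
  obtain ⟨g, g_supp, g_close, g_cont, g_int⟩ :=
    hφ.exists_hasCompactSupport_integral_sub_le (show (0:ℝ) < ε/4 by linarith)
  obtain ⟨C, hC⟩ := g_cont.bounded_above_of_compact_support g_supp
  set K : Set ℂ := Metric.cthickening 1 (tsupport g) with hK
  have hKcl : IsClosed K := Metric.isClosed_cthickening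
  have hKcomp : IsCompact K := g_supp.cthickening
  -- dominated convergence for the compactly supported continuous approximation
  have hB : Filter.Tendsto (fun δ : ℝ => ∫ z : ℂ, ‖g (z + (δ : ℂ)) - g z‖)
      (nhdsWithin 0 (Set.Ioi 0)) (nhds 0) := by
    have hDCT := tendsto_integral_filter_of_dominated_convergence
      (μ := volume) (l := nhdsWithin (0:ℝ) (Set.Ioi 0))
      (F := fun (δ : ℝ) (z : ℂ) => ‖g (z + (δ : ℂ)) - g z‖) (f := fun _ : ℂ => (0:ℝ))
      (K.indicator fun _ => 2 * C) ?_ ?_ ?_ ?_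
    · simpa using hDCT
    · filter_upwards with δ
      exact ((g_cont.comp (continuous_id.add continuous_const)).sub g_cont).norm.aestronglyMeasurable
    · filter_upwards [Ioo_mem_nhdsGT_of_mem (by norm_num : (0:ℝ) ∈ Set.Ico 0 1)]
        with δ hδ
      filter_upwards with z
      rw [Real.norm_eq_abs, abs_of_nonneg (norm_nonneg _)]
      by_cases hz : z ∈ K
      · rw [Set.indicator_of_mem hz]
        calc ‖g (z + (δ : ℂ)) - g z‖ ≤ ‖g (z + (δ : ℂ))‖ + ‖g z‖ := norm_sub_le _ _
        _ ≤ C + C := add_le_add (hC _) (hC _)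
        _ = 2 * C := by ring
      · rw [Set.indicator_of_notMem hz]
        have hz1 : z ∉ tsupport g := fun h => hz (Metric.self_subset_cthickening _ h)
        have hz2 : z + (δ : ℂ) ∉ tsupport g := by
          intro h
          apply hz
          refine Metric.mem_cthickening_of_dist_le z (z + (δ : ℂ)) 1 _ h ?_
          have hd : dist z (z + (δ : ℂ)) = |δ| := by
            rw [dist_comm, Complex.dist_eq, add_sub_cancel_left, Complex.norm_real, Real.norm_eq_abs]
          rw [hd, abs_of_nonneg hδ.1.le]
          exact hδ.2.le
        rw [image_eq_zero_of_notMem_tsupport hz1, image_eq_zero_of_notMem_tsupport hz2]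
        simp
    · rw [integrable_indicator_iff hKcl.measurableSet]
      exact integrableOn_const hKcomp.measure_lt_top.ne
    · filter_upwards with z
      have hcont : Continuous fun δ : ℝ => ‖g (z + (δ : ℂ)) - g z‖ :=
        ((g_cont.comp (continuous_const.add Complex.continuous_ofReal)).sub continuous_const).norm
      have h2 : Filter.Tendsto (fun δ : ℝ => ‖g (z + (δ : ℂ)) - g z‖)
          (nhdsWithin 0 (Set.Ioi 0)) (nhds ‖g (z + ((0:ℝ) : ℂ)) - g z‖) :=
        (hcont.tendsto 0).mono_left nhdsWithin_le_nhds
      simpa using h2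
  have hεpos : (0:ℝ) < ε/2 := by linarith
  filter_upwards [hB.eventually_lt_const hεpos, self_mem_nhdsWithin] with δ hδB hδpos
  rw [Real.norm_eq_abs, abs_of_nonneg (integral_nonneg fun z => norm_nonneg _)]
  have hφτ : Integrable (fun z : ℂ => φ (z + (δ : ℂ))) := hφ.comp_add_right _
  have hgτ : Integrable (fun z : ℂ => g (z + (δ : ℂ))) := g_int.comp_add_right _
  have h1 : Integrable (fun z : ℂ => ‖φ (z + (δ : ℂ)) - g (z + (δ : ℂ))‖) :=
    (hφτ.sub hgτ).norm
  have h2 : Integrable (fun z : ℂ => ‖g (z + (δ : ℂ)) - g z‖) := (hgτ.sub g_int).norm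
  have h3 : Integrable (fun z : ℂ => ‖g z - φ z‖) := (g_int.sub hφ).norm
  have step1 : (∫ z : ℂ, ‖φ (z + (δ : ℂ)) - φ z‖) ≤
      ∫ z : ℂ, (‖φ (z + (δ : ℂ)) - g (z + (δ : ℂ))‖ + ‖g (z + (δ : ℂ)) - g z‖
        + ‖g z - φ z‖) := by
    refine integral_mono (hφτ.sub hφ).norm ((h1.add h2).add h3) fun z => ?_
    have hz : φ (z + (δ : ℂ)) - φ z =
        (φ (z + (δ : ℂ)) - g (z + (δ : ℂ))) + (g (z + (δ : ℂ)) - g z) + (g z - φ z) := by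
      ring
    rw [hz]
    exact norm_add₃_le
  have step2 : (∫ z : ℂ, (‖φ (z + (δ : ℂ)) - g (z + (δ : ℂ))‖ + ‖g (z + (δ : ℂ)) - g z‖
        + ‖g z - φ z‖)) =
      (∫ z : ℂ, ‖φ (z + (δ : ℂ)) - g (z + (δ : ℂ))‖) + (∫ z : ℂ, ‖g (z + (δ : ℂ)) - g z‖)
        + ∫ z : ℂ, ‖g z - φ z‖ := by
    have h12 : Integrable (fun z : ℂ => ‖φ (z + (δ : ℂ)) - g (z + (δ : ℂ))‖
        + ‖g (z + (δ : ℂ)) - g z‖) := h1.add h2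
    rw [integral_add h12 h3, integral_add h1 h2]
  have e1 : (∫ z : ℂ, ‖φ (z + (δ : ℂ)) - g (z + (δ : ℂ))‖) = ∫ z : ℂ, ‖φ z - g z‖ :=
    integral_add_right_eq_self (fun z : ℂ => ‖φ z - g z‖) ((δ : ℂ))
  have e3 : (∫ z : ℂ, ‖g z - φ z‖) = ∫ z : ℂ, ‖φ z - g z‖ := by
    simp_rw [norm_sub_rev]
  calc (∫ z : ℂ, ‖φ (z + (δ : ℂ)) - φ z‖) ≤ _ := step1
  _ = (∫ z : ℂ, ‖φ z - g z‖) + (∫ z : ℂ, ‖g (z + (δ : ℂ)) - g z‖)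
      + ∫ z : ℂ, ‖φ z - g z‖ := by rw [step2, e1, e3]
  _ < ε := by linarith [g_close, hδB]

lemma key_bound (φ : ℂ → ℂ) (hφ : Integrable φ) {δ : ℝ} (hδ : 0 < δ) :
    ‖∫ z : ℂ, muDelta δ z * φ z‖ ≤ (1/6) * ∫ z : ℂ, ‖φ (z + (δ : ℂ)) - φ z‖ := by
  have hmes : AEStronglyMeasurable (muDelta δ) volume :=
    (measurable_muDelta δ).aestronglyMeasurable
  have hbdd : ∃ C, ∀ z, ‖muDelta δ z‖ ≤ C := ⟨1/3, fun z => le_of_eq (norm_muDelta δ z)⟩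
  have hφτ : Integrable (fun z : ℂ => φ (z + (δ : ℂ))) := hφ.comp_add_right _
  have h1 : Integrable (fun z : ℂ => muDelta δ z * φ z) := hφ.bdd_mul hmes (Filter.Eventually.of_forall fun z => le_of_eq (norm_muDelta δ z))
  have h2 : Integrable (fun z : ℂ => muDelta δ z * φ (z + (δ : ℂ))) :=
    hφτ.bdd_mul hmes (Filter.Eventually.of_forall fun z => le_of_eq (norm_muDelta δ z))
  set I := ∫ z : ℂ, muDelta δ z * φ z with hI
  have key : (∫ z : ℂ, muDelta δ z * φ (z + (δ : ℂ))) = -I := by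
    have e : (∫ z : ℂ, muDelta δ z * φ (z + (δ : ℂ))) =
        -∫ z : ℂ, muDelta δ (z + (δ : ℂ)) * φ (z + (δ : ℂ)) := by
      rw [← integral_neg]
      congr 1
      funext z
      rw [muDelta_add hδ, neg_mul, neg_neg]
    rw [e, integral_add_right_eq_self (fun z : ℂ => muDelta δ z * φ z) ((δ : ℂ)), hI]
  have hsub : I + I = ∫ z : ℂ, muDelta δ z * (φ z - φ (z + (δ : ℂ))) := by
    simp_rw [mul_sub]
    rw [integral_sub h1 h2, key, sub_neg_eq_add]
  have norm2 : ‖I + I‖ = 2 * ‖I‖ := by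
    rw [← two_mul, norm_mul]
    simp
  have hle : ‖I + I‖ ≤ (1/3) * ∫ z : ℂ, ‖φ (z + (δ : ℂ)) - φ z‖ := by
    rw [hsub]
    calc ‖∫ z : ℂ, muDelta δ z * (φ z - φ (z + (δ : ℂ)))‖
        ≤ ∫ z : ℂ, ‖muDelta δ z * (φ z - φ (z + (δ : ℂ)))‖ :=
          norm_integral_le_integral_norm _
    _ = ∫ z : ℂ, (1/3) * ‖φ (z + (δ : ℂ)) - φ z‖ := by
        congr 1
        funext z
        rw [norm_mul, norm_muDelta, norm_sub_rev]
    _ = (1/3) * ∫ z : ℂ, ‖φ (z + (δ : ℂ)) - φ z‖ := integral_const_mul _ _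
  rw [norm2] at hle
  linarith

/-- `μ_δ` converges weakly to `0` as `δ → 0⁺`: for every integrable
`φ : ℂ → ℂ`, `∫_ℂ μ_δ(z)·φ(z) dA(z) → 0`. -/
theorem muDelta_tendsto_weakly_zero (φ : ℂ → ℂ) (hφ : Integrable φ) :
    Filter.Tendsto (fun δ : ℝ => ∫ z : ℂ, muDelta δ z * φ z)
      (nhdsWithin 0 (Set.Ioi 0)) (nhds 0) := by
  have hT := (tendsto_translate_L1 φ hφ).const_mul (1/6 : ℝ)
  rw [mul_zero] at hT
  refine squeeze_zero_norm' ?_ hT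
  filter_upwards [self_mem_nhdsWithin] with δ hδ
  exact key_bound φ hφ hδ

end
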